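/- (Lifted Lyapunov inequality from clock-based inequalities.) Let k ∈ ℕ, matrices X_0, …, X_k ∈ 𝕊^n all positive definite, and real matrices A, B, C, D, A_J, B_J, C_J, D_J, P of compatible dimensions. Suppose for each l ∈ {0,…,k-1}: [A, B; I, 0]ᵀ diag(X_{l+1}, -X_l) [A, B; I, 0] + [C, D; 0, I]ᵀ P [C, D; 0, I] ≺ 0, and additionally [A_J, B_J; I, 0]ᵀ diag(X_0, -X_k) [A_J, B_J; I, 0] + [C_J, D_J; 0, I]ᵀ P [C_J, D_J; 0, I] ≺ 0. Then with X := X_0, the lifted inequality (outer factor given by the matrices A_J A^k, A_J A^{k-1}B, …, B_J in the first row, identity/zero blocks, and the interleaved output rows C A^{j}, C A^{j-1}B,… D and C_J A^k, …, D_J) holds: the lifted matrix Uᵀ 𝓜 U ≺ 0, where 𝓜 = diag(X, -X, I_{k+1} ⊗ P) and U is the lifted outer factor of Theorem 1 of the paper. Concretely for k = 1: [A_J A, A_J B, B_J; I, 0, 0]ᵀ diag(X_0, -X_0) [...] + [C, D, 0; 0, I, 0]ᵀ P [...] + [C_J A, C_J B, D_J; 0, 0, I]ᵀ P [...] ≺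 0. -/

import Mathlib

open Matrix

private lemma quad_conj {m p : Type*} [Fintype m] [Fintype p]
    (U : Matrix m p ℝ) (S : Matrix m m ℝ) (z : p → ℝ) :
    z ⬝ᵥ (Uᵀ * S * U) *ᵥ z = (U *ᵥ z) ⬝ᵥ S *ᵥ (U *ᵥ z) := by
  rw [← mulVec_mulVec, ← mulVec_mulVec, dotProduct_mulVec, vecMul_transpose]

private lemma herm_conj {m p : Type*} [Fintype m] [Fintype p]
    (U : Matrix m p ℝ) {S : Matrix m m ℝ} (hS : S.IsHermitian) :
    (Uᵀ * S * U).IsHermitian := by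
  rw [← conjTranspose_eq_transpose_of_trivial]
  exact isHermitian_conjTranspose_mul_mul U hS

private lemma neg_quad {p : Type*} [Fintype p] {M : Matrix p p ℝ} (h : (-M).PosDef)
    (w : p → ℝ) : w ⬝ᵥ M *ᵥ w ≤ 0 ∧ (w ≠ 0 → w ⬝ᵥ M *ᵥ w < 0) := by
  constructor
  · have := h.posSemidef.dotProduct_mulVec_nonneg w
    simp only [star_trivial, neg_mulVec, dotProduct_neg] at this ⊢
    linarith
  · intro hw
    have := h.dotProduct_mulVec_pos hw
    simp only [star_trivial, neg_mulVec, dotProduct_neg] at this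
    linarith

/-- Lifted Lyapunov inequality from clock-based inequalities, concrete case `k = 1`:
the two clock-based LMIs (one flow step followed by one jump) imply the lifted
one-shot LMI with the common matrix `X = X₀`. -/
theorem lifted_from_clock_LMIs_k1 {n nd ne : ℕ}
    (A AJ : Matrix (Fin n) (Fin n) ℝ) (B BJ : Matrix (Fin n) (Fin nd) ℝ)
    (C CJ : Matrix (Fin ne) (Fin n) ℝ) (D DJ : Matrix (Fin ne) (Fin nd) ℝ)
    (P : Matrix (Fin ne ⊕ Fin nd) (Fin ne ⊕ Fin nd) ℝ) (hP : P.IsSymm)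
    (X₀ X₁ : Matrix (Fin n) (Fin n) ℝ) (hX₀ : X₀.PosDef) (hX₁ : X₁.PosDef)
    (hflow : (-((fromBlocks A B (1 : Matrix (Fin n) (Fin n) ℝ)
          (0 : Matrix (Fin n) (Fin nd) ℝ))ᵀ * fromBlocks X₁ 0 0 (-X₀) *
        fromBlocks A B (1 : Matrix (Fin n) (Fin n) ℝ) (0 : Matrix (Fin n) (Fin nd) ℝ) +
        (fromBlocks C D (0 : Matrix (Fin nd) (Fin n) ℝ)
          (1 : Matrix (Fin nd) (Fin nd) ℝ))ᵀ * P *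
        fromBlocks C D (0 : Matrix (Fin nd) (Fin n) ℝ)
          (1 : Matrix (Fin nd) (Fin nd) ℝ))).PosDef)
    (hjump : (-((fromBlocks AJ BJ (1 : Matrix (Fin n) (Fin n) ℝ)
          (0 : Matrix (Fin n) (Fin nd) ℝ))ᵀ * fromBlocks X₀ 0 0 (-X₁) *
        fromBlocks AJ BJ (1 : Matrix (Fin n) (Fin n) ℝ) (0 : Matrix (Fin n) (Fin nd) ℝ) +
        (fromBlocks CJ DJ (0 : Matrix (Fin nd) (Fin n) ℝ)
          (1 : Matrix (Fin nd) (Fin nd) ℝ))ᵀ * P *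
        fromBlocks CJ DJ (0 : Matrix (Fin nd) (Fin n) ℝ)
          (1 : Matrix (Fin nd) (Fin nd) ℝ))).PosDef) :
    (-((fromBlocks (AJ * A) (fromCols (AJ * B) BJ)
          (1 : Matrix (Fin n) (Fin n) ℝ)
          (0 : Matrix (Fin n) (Fin nd ⊕ Fin nd) ℝ))ᵀ *
        fromBlocks X₀ 0 0 (-X₀) *
        fromBlocks (AJ * A) (fromCols (AJ * B) BJ)
          (1 : Matrix (Fin n) (Fin n) ℝ)
          (0 : Matrix (Fin n) (Fin nd ⊕ Fin nd) ℝ) +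
        (fromBlocks C (fromCols D (0 : Matrix (Fin ne) (Fin nd) ℝ))
          (0 : Matrix (Fin nd) (Fin n) ℝ)
          (fromCols (1 : Matrix (Fin nd) (Fin nd) ℝ)
            (0 : Matrix (Fin nd) (Fin nd) ℝ)))ᵀ * P *
        fromBlocks C (fromCols D (0 : Matrix (Fin ne) (Fin nd) ℝ))
          (0 : Matrix (Fin nd) (Fin n) ℝ)
          (fromCols (1 : Matrix (Fin nd) (Fin nd) ℝ)
            (0 : Matrix (Fin nd) (Fin nd) ℝ)) +
        (fromBlocks (CJ * A) (fromCols (CJ * B) DJ)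
          (0 : Matrix (Fin nd) (Fin n) ℝ)
          (fromCols (0 : Matrix (Fin nd) (Fin nd) ℝ)
            (1 : Matrix (Fin nd) (Fin nd) ℝ)))ᵀ * P *
        fromBlocks (CJ * A) (fromCols (CJ * B) DJ)
          (0 : Matrix (Fin nd) (Fin n) ℝ)
          (fromCols (0 : Matrix (Fin nd) (Fin nd) ℝ)
            (1 : Matrix (Fin nd) (Fin nd) ℝ)))).PosDef := by
  have hPh : P.IsHermitian := by
    rw [IsHermitian, conjTranspose_eq_transpose_of_trivial]; exact hP
  have hX0h : (fromBlocks X₀ 0 0 (-X₀)).IsHermitian :=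
    isHermitian_fromBlocks_iff.mpr ⟨hX₀.1, by simp, by simp, hX₀.1.neg⟩
  apply PosDef.of_dotProduct_mulVec_pos
  · exact (((herm_conj _ hX0h).add (herm_conj _ hPh)).add (herm_conj _ hPh)).neg
  · intro z hz
    set x : Fin n → ℝ := fun i => z (Sum.inl i) with hx
    set d1 : Fin nd → ℝ := fun j => z (Sum.inr (Sum.inl j)) with hd1
    set d2 : Fin nd → ℝ := fun j => z (Sum.inr (Sum.inr j)) with hd2
    have hz' : z = Sum.elim x (Sum.elim d1 d2) := by
      ext (i | j | j) <;> rfl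
    set u : Fin n ⊕ Fin nd → ℝ := Sum.elim x d1 with hu
    set v : Fin n ⊕ Fin nd → ℝ := Sum.elim (A *ᵥ x + B *ᵥ d1) d2 with hv
    obtain ⟨hfle, hflt⟩ := neg_quad hflow u
    obtain ⟨hjle, hjlt⟩ := neg_quad hjump v
    have hkey : z ⬝ᵥ ((fromBlocks (AJ * A) (fromCols (AJ * B) BJ)
          (1 : Matrix (Fin n) (Fin n) ℝ)
          (0 : Matrix (Fin n) (Fin nd ⊕ Fin nd) ℝ))ᵀ *
        fromBlocks X₀ 0 0 (-X₀) *
        fromBlocks (AJ * A) (fromCols (AJ * B) BJ)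
          (1 : Matrix (Fin n) (Fin n) ℝ)
          (0 : Matrix (Fin n) (Fin nd ⊕ Fin nd) ℝ) +
        (fromBlocks C (fromCols D (0 : Matrix (Fin ne) (Fin nd) ℝ))
          (0 : Matrix (Fin nd) (Fin n) ℝ)
          (fromCols (1 : Matrix (Fin nd) (Fin nd) ℝ)
            (0 : Matrix (Fin nd) (Fin nd) ℝ)))ᵀ * P *
        fromBlocks C (fromCols D (0 : Matrix (Fin ne) (Fin nd) ℝ))
          (0 : Matrix (Fin nd) (Fin n) ℝ)
          (fromCols (1 : Matrix (Fin nd) (Fin nd) ℝ)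
            (0 : Matrix (Fin nd) (Fin nd) ℝ)) +
        (fromBlocks (CJ * A) (fromCols (CJ * B) DJ)
          (0 : Matrix (Fin nd) (Fin n) ℝ)
          (fromCols (0 : Matrix (Fin nd) (Fin nd) ℝ)
            (1 : Matrix (Fin nd) (Fin nd) ℝ)))ᵀ * P *
        fromBlocks (CJ * A) (fromCols (CJ * B) DJ)
          (0 : Matrix (Fin nd) (Fin n) ℝ)
          (fromCols (0 : Matrix (Fin nd) (Fin nd) ℝ)
            (1 : Matrix (Fin nd) (Fin nd) ℝ))) *ᵥ z =
        u ⬝ᵥ ((fromBlocks A B (1 : Matrix (Fin n) (Fin n) ℝ)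
          (0 : Matrix (Fin n) (Fin nd) ℝ))ᵀ * fromBlocks X₁ 0 0 (-X₀) *
        fromBlocks A B (1 : Matrix (Fin n) (Fin n) ℝ) (0 : Matrix (Fin n) (Fin nd) ℝ) +
        (fromBlocks C D (0 : Matrix (Fin nd) (Fin n) ℝ)
          (1 : Matrix (Fin nd) (Fin nd) ℝ))ᵀ * P *
        fromBlocks C D (0 : Matrix (Fin nd) (Fin n) ℝ)
          (1 : Matrix (Fin nd) (Fin nd) ℝ)) *ᵥ u +
        v ⬝ᵥ ((fromBlocks AJ BJ (1 : Matrix (Fin n) (Fin n) ℝ)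
          (0 : Matrix (Fin n) (Fin nd) ℝ))ᵀ * fromBlocks X₀ 0 0 (-X₁) *
        fromBlocks AJ BJ (1 : Matrix (Fin n) (Fin n) ℝ) (0 : Matrix (Fin n) (Fin nd) ℝ) +
        (fromBlocks CJ DJ (0 : Matrix (Fin nd) (Fin n) ℝ)
          (1 : Matrix (Fin nd) (Fin nd) ℝ))ᵀ * P *
        fromBlocks CJ DJ (0 : Matrix (Fin nd) (Fin n) ℝ)
          (1 : Matrix (Fin nd) (Fin nd) ℝ)) *ᵥ v := by
      rw [hz', hu, hv]
      simp only [add_mulVec, dotProduct_add, quad_conj]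
      simp only [fromBlocks_mulVec,
        Sum.elim_comp_inl, Sum.elim_comp_inr, fromCols_mulVec_sumElim,
        one_mulVec, zero_mulVec, mulVec_zero, zero_add, add_zero,
        mulVec_add, neg_mulVec, mulVec_neg, dotProduct_neg, neg_dotProduct,
        sumElim_dotProduct_sumElim, ← mulVec_mulVec]
      simp only [dotProduct_add, add_dotProduct, dotProduct_sub, sub_dotProduct,
        dotProduct_neg, neg_dotProduct]
      ring_nf
    have hne : u ≠ 0 ∨ v ≠ 0 := by
      by_contra h
      push_neg at h
      obtain ⟨h1, h2⟩ := h
      apply hz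
      rw [hz']
      have hx0 : x = 0 := funext fun i => congrFun h1 (Sum.inl i)
      have hd10 : d1 = 0 := funext fun j => congrFun h1 (Sum.inr j)
      have hd20 : d2 = 0 := funext fun j => congrFun h2 (Sum.inr j)
      rw [hx0, hd10, hd20]
      ext (i | j | j) <;> simp
    rw [star_trivial, neg_mulVec, dotProduct_neg, hkey]
    rcases hne with h | h
    · have := hflt h
      linarith
    · have := hjlt h
      linarith
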